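/- Let A be a commutative K-algebra graded by ℤ^n which is generated as a K-algebra by homogeneous elements f_1, …, f_r with f_i ∈ A_{d_i}. Then for every K-algebra homomorphism x : A → K, the orbit cone ω(x) equals the convex cone in ℚ^n generated over ℚ_{≥0} by the degrees d_i of those generators with x(f_i) ≠ 0. -/

import Mathlib

/-- The convex cone in `ℚ^n` generated over `ℚ_{≥0}` by a set `S`:
all finite nonnegative rational combinations of elements of `S`. -/
def coneGen {n : ℕ} (S : Set (Fin n → ℚ)) : Set (Fin n → ℚ) :=
  {v | ∃ (s : Finset (Fin n → ℚ)) (c : (Fin n → ℚ) → ℚ),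
    (∀ w ∈ s, 0 ≤ c w ∧ w ∈ S) ∧ v = ∑ w ∈ s, c w • w}

/-- The orbit cone `ω(x)` of a `K`-algebra homomorphism `x : A → K`: the convex
cone generated over `ℚ_{≥0}` by all `m ∈ ℤ^n` admitting `a ∈ 𝒜 m` with `x a ≠ 0`. -/
def orbitCone {K A : Type*} [Field K] [CommRing A] [Algebra K A]
    {n : ℕ} (𝒜 : (Fin n → ℤ) → Submodule K A) (x : A →ₐ[K] K) : Set (Fin n → ℚ) :=
  coneGen {v | ∃ (m : Fin n → ℤ) (a : A), a ∈ 𝒜 m ∧ x a ≠ 0 ∧ v = fun j => (m j : ℚ)}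

lemma subset_coneGen {n : ℕ} (S : Set (Fin n → ℚ)) : S ⊆ coneGen S := by
  intro v hv
  exact ⟨{v}, fun _ => 1, fun w hw => ⟨zero_le_one, by
    simp only [Finset.mem_singleton] at hw; exact hw ▸ hv⟩, by simp⟩

lemma coneGen_mono {n : ℕ} {S T : Set (Fin n → ℚ)} (h : S ⊆ T) :
    coneGen S ⊆ coneGen T := by
  rintro v ⟨s, c, hc, rfl⟩
  exact ⟨s, c, fun w hw => ⟨(hc w hw).1, h (hc w hw).2⟩, rfl⟩

lemma zero_mem_coneGen {n : ℕ} (S : Set (Fin n → ℚ)) : (0 : Fin n → ℚ) ∈ coneGen S :=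
  ⟨∅, 0, by simp, by simp⟩

lemma add_mem_coneGen {n : ℕ} {S : Set (Fin n → ℚ)} {v u : Fin n → ℚ}
    (hv : v ∈ coneGen S) (hu : u ∈ coneGen S) : v + u ∈ coneGen S := by
  obtain ⟨s1, c1, hc1, rfl⟩ := hv
  obtain ⟨s2, c2, hc2, rfl⟩ := hu
  classical
  refine ⟨s1 ∪ s2,
    fun w => (if w ∈ s1 then c1 w else 0) + (if w ∈ s2 then c2 w else 0), ?_, ?_⟩
  · intro w hw
    constructor
    · apply add_nonneg <;> split <;> first | exact (hc1 w ‹_›).1 | exact (hc2 w ‹_›).1 | rfl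
    · rcases Finset.mem_union.mp hw with h | h
      exacts [(hc1 w h).2, (hc2 w h).2]
  · simp only [add_smul, ite_smul, zero_smul, Finset.sum_add_distrib]
    rw [Finset.sum_ite_mem, Finset.sum_ite_mem, Finset.union_inter_cancel_left,
      Finset.union_inter_cancel_right]

lemma smul_mem_coneGen {n : ℕ} {S : Set (Fin n → ℚ)} {v : Fin n → ℚ} {c : ℚ}
    (hc : 0 ≤ c) (hv : v ∈ coneGen S) : c • v ∈ coneGen S := by
  obtain ⟨s, c1, hc1, rfl⟩ := hv
  refine ⟨s, fun w => c * c1 w, fun w hw => ⟨mul_nonneg hc (hc1 w hw).1, (hc1 w hw).2⟩, ?_⟩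
  rw [Finset.smul_sum]
  exact Finset.sum_congr rfl fun w _ => (mul_smul c (c1 w) w).symm

lemma coneGen_subset_coneGen {n : ℕ} {S T : Set (Fin n → ℚ)} (h : T ⊆ coneGen S) :
    coneGen T ⊆ coneGen S := by
  rintro v ⟨s, c, hc, rfl⟩
  induction s using Finset.induction with
  | empty => simpa using zero_mem_coneGen S
  | insert _ _ hw ih =>
    rw [Finset.sum_insert hw]
    exact add_mem_coneGen
      (smul_mem_coneGen (hc _ (Finset.mem_insert_self _ _)).1
        (h (hc _ (Finset.mem_insert_self _ _)).2))
      (ih fun w hw => hc w (Finset.mem_insert_of_mem hw))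

/-- Let `A` be a commutative `K`-algebra graded by `ℤ^n` which is generated as a
`K`-algebra by homogeneous elements `f 1, …, f r` with `f i ∈ 𝒜 (d i)`. Then for
every `K`-algebra homomorphism `x : A → K`, the orbit cone `ω(x)` equals the convex
cone in `ℚ^n` generated over `ℚ_{≥0}` by the degrees `d i` of those generators with
`x (f i) ≠ 0`. -/
theorem orbitCone_eq_coneGen_of_degrees_of_generators
    {K A : Type*} [Field K] [CommRing A] [Algebra K A]
    {n : ℕ} (hn : 1 ≤ n) (𝒜 : (Fin n → ℤ) → Submodule K A) [GradedAlgebra 𝒜]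
    {r : ℕ} (f : Fin r → A) (d : Fin r → Fin n → ℤ)
    (hf : ∀ i, f i ∈ 𝒜 (d i))
    (hgen : Algebra.adjoin K (Set.range f) = ⊤)
    (x : A →ₐ[K] K) :
    orbitCone 𝒜 x =
      coneGen {v | ∃ i : Fin r, x (f i) ≠ 0 ∧ v = fun j => (d i j : ℚ)} := by
  classical
  set S : Set (Fin n → ℚ) := {v | ∃ i : Fin r, x (f i) ≠ 0 ∧ v = fun j => (d i j : ℚ)}
  -- the key claim
  have key : ∀ a : A, ∀ m : Fin n → ℤ,
      x ((DirectSum.decompose 𝒜 a m : A)) ≠ 0 → (fun j => (m j : ℚ)) ∈ coneGen S := by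
    intro a
    have ha : a ∈ Submodule.span K ((Submonoid.closure (Set.range f) : Submonoid A) : Set A) := by
      rw [← Algebra.adjoin_eq_span, hgen]; trivial
    induction ha using Submodule.span_induction with
    | mem μ hμ =>
      induction hμ using Submonoid.closure_induction with
      | mem μ hμ =>
        obtain ⟨i, rfl⟩ := hμ
        intro m hm
        by_cases hmd : d i = m
        · subst hmd
          rw [DirectSum.decompose_of_mem_same 𝒜 (hf i)] at hm
          exact subset_coneGen S ⟨i, hm, rfl⟩
        · rw [DirectSum.decompose_of_mem_ne 𝒜 (hf i) hmd] at hm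
          simp at hm
      | one =>
        intro m hm
        by_cases hmd : (0 : Fin n → ℤ) = m
        · subst hmd
          have : (fun j => ((0 : Fin n → ℤ) j : ℚ)) = (0 : Fin n → ℚ) := by
            funext j; simp
          rw [this]
          exact zero_mem_coneGen S
        · rw [DirectSum.decompose_of_mem_ne 𝒜 SetLike.GradedOne.one_mem hmd] at hm
          simp at hm
      | mul μ ν hμmem hνmem ihμ ihν =>
        intro m hm
        rw [DirectSum.decompose_mul, DirectSum.coe_mul_apply] at hm
        rw [map_sum] at hm
        obtain ⟨ij, hij, hne⟩ := Finset.exists_ne_zero_of_sum_ne_zero hm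
        rw [map_mul] at hne
        rw [Finset.mem_filter] at hij
        have h1 : x ((DirectSum.decompose 𝒜 μ ij.1 : A)) ≠ 0 := fun h => hne (by rw [h, zero_mul])
        have h2 : x ((DirectSum.decompose 𝒜 ν ij.2 : A)) ≠ 0 := fun h => hne (by rw [h, mul_zero])
        have heq : (fun j => (m j : ℚ)) =
            (fun j => (ij.1 j : ℚ)) + (fun j => (ij.2 j : ℚ)) := by
          funext j
          have := hij.2
          rw [← this]
          simp [Pi.add_apply]
        rw [heq]
        exact add_mem_coneGen (ihμ ij.1 h1) (ihν ij.2 h2)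
    | zero =>
      intro m hm
      simp at hm
    | add a b _ _ iha ihb =>
      intro m hm
      rw [DirectSum.decompose_add] at hm
      simp only [DirectSum.add_apply, Submodule.coe_add, map_add] at hm
      rcases (by by_contra h; push_neg at h; rw [h.1, h.2, add_zero] at hm; exact hm rfl :
        x ((DirectSum.decompose 𝒜 a m : A)) ≠ 0 ∨ x ((DirectSum.decompose 𝒜 b m : A)) ≠ 0) with
        h | h
      exacts [iha m h, ihb m h]
    | smul c a _ iha =>
      intro m hm
      rw [DirectSum.decompose_smul] at hm
      rw [DFinsupp.smul_apply] at hm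
      simp only [Submodule.coe_smul, map_smul, smul_eq_mul] at hm
      exact iha m fun h => hm (by rw [h, mul_zero])
  apply le_antisymm
  · apply coneGen_subset_coneGen
    rintro v ⟨m, a, ham, hxa, rfl⟩
    refine key a m ?_
    rwa [DirectSum.decompose_of_mem_same 𝒜 ham]
  · apply coneGen_mono
    rintro v ⟨i, hxi, rfl⟩
    exact ⟨d i, f i, hf i, hxi, rfl⟩
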